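/- Consider the error system ẋ̃ = -(c₁I + L)x̃ - Ē Ẑ(t) w̃, ẇ̃ = Ẑ(t) Ē^T x̃ with L symmetric and c₁ + λ_min(L) > 0. Then every solution is uniformly bounded: |x̃(t)|² + |w̃(t)|² ≤ |x̃(t₀)|² + |w̃(t₀)|² for all t ≥ t₀, and ∫_{t₀}^∞ |x̃(s)|² ds ≤ (|x̃(t₀)|² + |w̃(t₀)|²)/(2(c₁+λ_min(L))). -/

import Mathlib

open Matrix BigOperators MeasureTheory

lemma rayleigh_min_bound {N : ℕ} {L : Matrix (Fin N) (Fin N) ℝ} (hsym : Lᵀ = L) {lam : ℝ}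
    (hlb : ∀ μ : ℝ, (∃ v : Fin N → ℝ, v ≠ 0 ∧ L *ᵥ v = μ • v) → lam ≤ μ)
    (v : Fin N → ℝ) : lam * (v ⬝ᵥ v) ≤ v ⬝ᵥ (L *ᵥ v) := by
  have hH : L.IsHermitian := by
    rwa [Matrix.IsHermitian, conjTranspose_eq_transpose_of_trivial]
  have hA : (L - lam • (1 : Matrix (Fin N) (Fin N) ℝ)).IsHermitian := by
    refine hH.sub ?_
    rw [Matrix.IsHermitian, conjTranspose_eq_transpose_of_trivial, transpose_smul,
      transpose_one]
  have hpsd : (L - lam • (1 : Matrix (Fin N) (Fin N) ℝ)).PosSemidef := by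
    refine hA.posSemidef_iff_eigenvalues_nonneg.mpr fun i => ?_
    set u : Fin N → ℝ := ⇑(hA.eigenvectorBasis i) with hu
    have hmu : (L - lam • 1) *ᵥ u = hA.eigenvalues i • u := hA.mulVec_eigenvectorBasis i
    have hune : u ≠ 0 := by
      have := hA.eigenvectorBasis.toBasis.ne_zero i
      intro h
      apply this
      ext j
      exact congrFun h j
    have hLu : L *ᵥ u = (hA.eigenvalues i + lam) • u := by
      have : L *ᵥ u - lam • u = hA.eigenvalues i • u := by
        rw [← hmu, Matrix.sub_mulVec, smul_mulVec, one_mulVec]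
      have h2 := congrArg (· + lam • u) this
      simp only [sub_add_cancel] at h2
      rw [h2, add_smul, add_comm]
    have := hlb _ ⟨u, hune, hLu⟩
    exact (by linarith : (0:ℝ) ≤ hA.eigenvalues i)
  have h0 := hpsd.dotProduct_mulVec_nonneg v
  simp only [star_trivial] at h0
  rw [Matrix.sub_mulVec, smul_mulVec, one_mulVec, dotProduct_sub,
    dotProduct_smul, smul_eq_mul] at h0
  linarith

theorem error_system_uniform_boundedness (N M : ℕ) (c₁ lam : ℝ)
    (L : Matrix (Fin N) (Fin N) ℝ) (hsym : Lᵀ = L)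
    (hlam : IsLeast {μ : ℝ | ∃ v : Fin N → ℝ, v ≠ 0 ∧ L *ᵥ v = μ • v} lam)
    (hc : 0 < c₁ + lam)
    (E : Matrix (Fin N) (Fin M) ℝ) (z : ℝ → Fin M → ℝ) (hz : Continuous z)
    (t₀ : ℝ) (x : ℝ → Fin N → ℝ) (w : ℝ → Fin M → ℝ)
    (hx : ∀ t, t₀ ≤ t → HasDerivAt x
      (-((c₁ • (1 : Matrix (Fin N) (Fin N) ℝ) + L) *ᵥ x t)
        - (E * Matrix.diagonal (z t)) *ᵥ w t) t)
    (hw : ∀ t, t₀ ≤ t → HasDerivAt w ((Matrix.diagonal (z t) * Eᵀ) *ᵥ x t) t) :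
    (∀ t, t₀ ≤ t →
      ∑ i, x t i ^ 2 + ∑ i, w t i ^ 2 ≤ ∑ i, x t₀ i ^ 2 + ∑ i, w t₀ i ^ 2) ∧
    (∫ sᵤ in Set.Ioi t₀, (∑ i, x sᵤ i ^ 2)) ≤
      (∑ i, x t₀ i ^ 2 + ∑ i, w t₀ i ^ 2) / (2 * (c₁ + lam)) := by
  set A : Matrix (Fin N) (Fin N) ℝ := c₁ • (1 : Matrix (Fin N) (Fin N) ℝ) + L with hA
  set V : ℝ → ℝ := fun t => ∑ i, x t i ^ 2 + ∑ i, w t i ^ 2 with hV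
  set D : ℝ → ℝ := fun t => -2 * (x t ⬝ᵥ (A *ᵥ x t)) with hD
  set f : ℝ → ℝ := fun t => ∑ i, x t i ^ 2 with hf
  set k : ℝ := c₁ + lam with hk
  -- derivative of V
  have hVd : ∀ t, t₀ ≤ t → HasDerivAt V (D t) t := by
    intro t ht
    have hx' := hx t ht
    have hw' := hw t ht
    set x' := -(A *ᵥ x t) - (E * Matrix.diagonal (z t)) *ᵥ w t with hx'def
    set w' := (Matrix.diagonal (z t) * Eᵀ) *ᵥ x t with hw'def
    have h1 : HasDerivAt (fun s => ∑ i, x s i ^ 2) (∑ i, 2 * x t i * x' i) t := by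
      apply HasDerivAt.fun_sum
      intro i _
      have := (hasDerivAt_pi.mp hx') i
      simpa using this.fun_pow 2
    have h2 : HasDerivAt (fun s => ∑ i, w s i ^ 2) (∑ i, 2 * w t i * w' i) t := by
      apply HasDerivAt.fun_sum
      intro i _
      have := (hasDerivAt_pi.mp hw') i
      simpa using this.fun_pow 2
    have h3 := h1.add h2
    have key : (∑ i, 2 * x t i * x' i) + (∑ i, 2 * w t i * w' i) = D t := by
      have hxsum : (∑ i, 2 * x t i * x' i) = 2 * (x t ⬝ᵥ x') := by
        simp [dotProduct, Finset.mul_sum, mul_assoc]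
      have hwsum : (∑ i, 2 * w t i * w' i) = 2 * (w t ⬝ᵥ w') := by
        simp [dotProduct, Finset.mul_sum, mul_assoc]
      have hcross : x t ⬝ᵥ ((E * Matrix.diagonal (z t)) *ᵥ w t) = w t ⬝ᵥ w' := by
        rw [hw'def, Matrix.dotProduct_mulVec, dotProduct_comm]
        congr 1
        rw [← Matrix.mulVec_transpose, Matrix.transpose_mul, Matrix.diagonal_transpose]
      rw [hxsum, hwsum, hx'def]
      rw [dotProduct_sub, dotProduct_neg, hcross]
      ring
    rw [← key]
    exact h3
  -- pointwise bound on D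
  have hDle : ∀ t, D t ≤ -2 * k * f t := by
    intro t
    have hray := rayleigh_min_bound hsym (fun μ hμ => hlam.2 hμ) (x t)
    have hAx : x t ⬝ᵥ (A *ᵥ x t) = c₁ * (x t ⬝ᵥ x t) + x t ⬝ᵥ (L *ᵥ x t) := by
      rw [hA, Matrix.add_mulVec, smul_mulVec, one_mulVec, dotProduct_add,
        dotProduct_smul, smul_eq_mul]
    have hfd : f t = x t ⬝ᵥ x t := by
      simp [hf, dotProduct, pow_two]
    have hDt : D t = -2 * (x t ⬝ᵥ (A *ᵥ x t)) := rfl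
    rw [hDt, hfd, hAx, hk]
    linarith [hray]
  have hfnn : ∀ t, 0 ≤ f t := fun t => Finset.sum_nonneg fun i _ => sq_nonneg _
  have hVnn : ∀ t, 0 ≤ V t :=
    fun t => add_nonneg (hfnn t) (Finset.sum_nonneg fun i _ => sq_nonneg _)
  have hDnp : ∀ t, D t ≤ 0 := by
    intro t
    calc D t ≤ -2 * k * f t := hDle t
    _ ≤ 0 := by nlinarith [hfnn t, hc]
  -- continuity
  have hxc : ContinuousOn x (Set.Ici t₀) :=
    fun t ht => ((hx t ht).continuousAt).continuousWithinAt
  have hwc : ContinuousOn w (Set.Ici t₀) :=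
    fun t ht => ((hw t ht).continuousAt).continuousWithinAt
  have hxic : ∀ i, ContinuousOn (fun t => x t i) (Set.Ici t₀) := by
    intro i
    exact (continuous_apply i).comp_continuousOn hxc
  have hfc : ContinuousOn f (Set.Ici t₀) := by
    apply continuousOn_finset_sum
    intro i _
    exact ((hxic i).pow 2)
  have hDc : ContinuousOn D (Set.Ici t₀) := by
    have : ContinuousOn (fun t => x t ⬝ᵥ (A *ᵥ x t)) (Set.Ici t₀) := by
      simp only [dotProduct, Matrix.mulVec]
      apply continuousOn_finset_sum
      intro i _
      refine (hxic i).mul ?_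
      apply continuousOn_finset_sum
      intro j _
      exact continuousOn_const.mul (hxic j)
    exact continuousOn_const.mul this
  -- FTC on [t₀, t]
  have hFTC : ∀ t, t₀ ≤ t → ∫ s in t₀..t, D s = V t - V t₀ := by
    intro t ht
    have hsub : Set.uIcc t₀ t ⊆ Set.Ici t₀ := by
      rw [Set.uIcc_of_le ht]
      exact fun s hs => hs.1
    apply intervalIntegral.integral_eq_sub_of_hasDerivAt
    · intro s hs
      exact hVd s (hsub hs)
    · exact (hDc.mono hsub).intervalIntegrable
  have h2k : (0:ℝ) < 2 * k := by linarith
  have hmono : ∀ t, t₀ ≤ t → V t ≤ V t₀ := by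
    intro t ht
    have h1 := hFTC t ht
    have h2 : ∫ s in t₀..t, D s ≤ 0 := by
      rw [intervalIntegral.integral_of_le ht]
      exact MeasureTheory.integral_nonpos fun s => hDnp s
    linarith
  have hIbound : ∀ t, t₀ ≤ t → ∫ s in t₀..t, f s ≤ V t₀ / (2 * k) := by
    intro t ht
    have hsub : Set.uIcc t₀ t ⊆ Set.Ici t₀ := by
      rw [Set.uIcc_of_le ht]
      exact fun s hs => hs.1
    have hfint : IntervalIntegrable f MeasureTheory.volume t₀ t :=
      (hfc.mono hsub).intervalIntegrable
    have hDint : IntervalIntegrable D MeasureTheory.volume t₀ t :=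
      (hDc.mono hsub).intervalIntegrable
    have hmonoI : ∫ s in t₀..t, f s ≤ ∫ s in t₀..t, (-(1 / (2 * k))) * D s := by
      apply intervalIntegral.integral_mono_on ht hfint (hDint.const_mul _)
      intro s _
      have hh := mul_le_mul_of_nonneg_left (hDle s)
        (le_of_lt (by positivity : (0:ℝ) < 1 / (2 * k)))
      have hkne : (2:ℝ) * k ≠ 0 := ne_of_gt h2k
      rw [neg_mul]
      rw [le_neg]
      calc -f s = 1 / (2 * k) * (-2 * k * f s) := by field_simp
      _ ≥ 1 / (2 * k) * D s := hh
      _ = _ := rfl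
    have heq : ∫ s in t₀..t, (-(1 / (2 * k))) * D s = -(1 / (2 * k)) * (V t - V t₀) := by
      rw [intervalIntegral.integral_const_mul, hFTC t ht]
    have hVt := hVnn t
    rw [heq] at hmonoI
    calc ∫ s in t₀..t, f s ≤ -(1 / (2 * k)) * (V t - V t₀) := hmonoI
    _ ≤ -(1 / (2 * k)) * (0 - V t₀) := by
        apply mul_le_mul_of_nonpos_left _ (neg_nonpos.mpr (le_of_lt (by positivity : (0:ℝ) < 1/(2*k))))
        linarith
    _ = V t₀ / (2 * k) := by field_simp; ring
  have hfIoc : ∀ b : ℝ, MeasureTheory.IntegrableOn f (Set.Ioc t₀ b) MeasureTheory.volume := by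
    intro b
    rcases le_or_gt b t₀ with hb | hb
    · rw [Set.Ioc_eq_empty (by exact fun h => absurd hb (not_le.mpr h))]
      exact MeasureTheory.integrableOn_empty
    · have hsub : Set.uIcc t₀ b ⊆ Set.Ici t₀ := by
        rw [Set.uIcc_of_le hb.le]
        exact fun s hs => hs.1
      exact (intervalIntegrable_iff_integrableOn_Ioc_of_le hb.le).mp
        ((hfc.mono hsub).intervalIntegrable)
  have hbound : ∀ᶠ b in Filter.atTop, (∫ s in t₀..b, ‖f s‖) ≤ V t₀ / (2 * k) := by
    filter_upwards [Filter.eventually_ge_atTop t₀] with b hb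
    have : (∫ s in t₀..b, ‖f s‖) = ∫ s in t₀..b, f s := by
      apply intervalIntegral.integral_congr
      intro s _
      exact Real.norm_of_nonneg (hfnn s)
    rw [this]
    exact hIbound b hb
  have hfint' : MeasureTheory.IntegrableOn f (Set.Ioi t₀) MeasureTheory.volume :=
    MeasureTheory.integrableOn_Ioi_of_intervalIntegral_norm_bounded (V t₀ / (2 * k)) t₀
      hfIoc Filter.tendsto_id hbound
  have hlim := MeasureTheory.intervalIntegral_tendsto_integral_Ioi t₀ hfint' Filter.tendsto_id
  have hfinal : (∫ s in Set.Ioi t₀, f s) ≤ V t₀ / (2 * k) := by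
    refine le_of_tendsto hlim ?_
    filter_upwards [Filter.eventually_ge_atTop t₀] with b hb
    exact hIbound b hb
  exact ⟨fun t ht => hmono t ht, hfinal⟩
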